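/- ℓ1 stability of the CVaR distortion: for two probability mass functions p and p̂ on a finite type S, a fixed value function V, and α ∈ (0,1], the corresponding CVaR distortion weightings μ and μ̂ (supported on the worst α-portion of V under p and p̂ respectively) satisfy ∑_s |μ̂(s) − μ(s)| ≤ 2 · ∑_s |p̂(s) − p(s)|. -/

import Mathlib

open Finset

/-- The CVaR distortion weighting of a distribution `q` at risk level `α`, for states sorted in
ascending order of value (the linear order on `S` is assumed to sort states by `V`):
full mass `q s` strictly below the `α`-quantile, residual mass at the quantile, and `0` above. -/
noncomputable def distortion {S : Type*} [Fintype S] [LinearOrder S]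
    (α : ℝ) (q : S → ℝ) (s : S) : ℝ :=
  min (q s) (max (α - ∑ t ∈ Finset.univ.filter (fun t => t < s), q t) 0)

set_option maxHeartbeats 1000000 in
private lemma key_ineq (A B c α L R : ℝ) (hc : 0 ≤ c)
    (hL : L ≤ α - (B - A)) (hR : α - (B - A) ≤ R) (hLa : L ≤ α) (haR : α ≤ R) :
    |min c (max (α - B) 0) - min c (max (α - A) 0)| ≤
      min (max (A + c) L) R - min (max A L) R := by
  rw [abs_sub_le_iff]
  constructor <;> (simp only [min_def, max_def]; split_ifs <;> linarith)

private lemma lip_min (a b x : ℝ) : |min a x - min b x| ≤ |a - b| := by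
  rw [abs_sub_le_iff]
  constructor <;>
    (simp only [min_def]; split_ifs <;>
      rcases abs_cases (a - b) with ⟨h1, h2⟩ | ⟨h1, h2⟩ <;> linarith)

private lemma tele {S : Type*} [Fintype S] [LinearOrder S] (p : S → ℝ) (g : ℝ → ℝ)
    (A : Finset S) :
    ∑ s ∈ A, (g ((∑ t ∈ A.filter (fun t => t < s), p t) + p s)
        - g (∑ t ∈ A.filter (fun t => t < s), p t)) = g (∑ t ∈ A, p t) - g 0 := by
  induction A using Finset.induction_on_max with
  | empty => simp
  | insert m A hm ih =>
    have hmA : m ∉ A := fun h => lt_irrefl m (hm m h)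
    have h1 : (insert m A).filter (fun t => t < m) = A := by
      ext a
      simp only [mem_filter, mem_insert]
      constructor
      · rintro ⟨rfl | h, hlt⟩
        · exact absurd hlt (lt_irrefl _)
        · exact h
      · exact fun h => ⟨Or.inr h, hm a h⟩
    have h2 : ∀ s ∈ A, (insert m A).filter (fun t => t < s) = A.filter (fun t => t < s) := by
      intro s hs
      ext a
      simp only [mem_filter, mem_insert]
      constructor
      · rintro ⟨rfl | h, hlt⟩
        · exact absurd hlt (not_lt.2 (hm s hs).le)
        · exact ⟨h, hlt⟩
      · exact fun h => ⟨Or.inr h.1, h.2⟩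
    have h3 : ∑ s ∈ A, (g ((∑ t ∈ (insert m A).filter (fun t => t < s), p t) + p s)
        - g (∑ t ∈ (insert m A).filter (fun t => t < s), p t)) = g (∑ t ∈ A, p t) - g 0 :=
      (Finset.sum_congr rfl (fun s hs => by rw [h2 s hs])).trans ih
    rw [Finset.sum_insert hmA, h1, h3, Finset.sum_insert hmA]
    ring

theorem distortion_l1_stability {S : Type*} [Fintype S] [LinearOrder S] [Nonempty S]
    (p phat V : S → ℝ) (α : ℝ) (hα : 0 < α) (hα1 : α ≤ 1)
    (hp : ∀ s, 0 ≤ p s) (hp1 : ∑ s, p s = 1)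
    (hphat : ∀ s, 0 ≤ phat s) (hphat1 : ∑ s, phat s = 1)
    (hV : Monotone V) :
    ∑ s, |distortion α phat s - distortion α p s| ≤ 2 * ∑ s, |phat s - p s| := by
  set Ep : ℝ := ∑ s, max (phat s - p s) 0 with hEp
  set Em : ℝ := ∑ s, max (p s - phat s) 0 with hEm
  have hEp0 : 0 ≤ Ep := Finset.sum_nonneg fun s _ => le_max_right _ _
  have hEm0 : 0 ≤ Em := Finset.sum_nonneg fun s _ => le_max_right _ _
  set L : ℝ := α - Ep with hLdef
  set R : ℝ := α + Em with hRdef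
  have hLR : L ≤ R := by rw [hLdef, hRdef]; linarith
  set g : ℝ → ℝ := fun x => min (max x L) R with hg
  have hEsum : Ep + Em = ∑ s, |phat s - p s| := by
    rw [hEp, hEm, ← Finset.sum_add_distrib]
    refine Finset.sum_congr rfl fun s _ => ?_
    rcases abs_cases (phat s - p s) with ⟨h1, h2⟩ | ⟨h1, h2⟩ <;>
      simp only [max_def] <;> split_ifs <;> linarith
  have hpt : ∀ s, |distortion α phat s - distortion α p s| ≤
      |phat s - p s| +
        (g ((∑ t ∈ Finset.univ.filter (fun t => t < s), p t) + p s)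
          - g (∑ t ∈ Finset.univ.filter (fun t => t < s), p t)) := by
    intro s
    set A := ∑ t ∈ Finset.univ.filter (fun t => t < s), p t with hA
    set B := ∑ t ∈ Finset.univ.filter (fun t => t < s), phat t with hB
    have hBA1 : B - A ≤ Ep := by
      have hd : B - A = ∑ t ∈ Finset.univ.filter (fun t => t < s), (phat t - p t) := by
        rw [Finset.sum_sub_distrib, hA, hB]
      rw [hd, hEp]
      calc ∑ t ∈ Finset.univ.filter (fun t => t < s), (phat t - p t)
          ≤ ∑ t ∈ Finset.univ.filter (fun t => t < s), max (phat t - p t) 0 :=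
            Finset.sum_le_sum fun t _ => le_max_left _ _
        _ ≤ ∑ t, max (phat t - p t) 0 :=
            Finset.sum_le_sum_of_subset_of_nonneg (Finset.filter_subset _ _)
              (fun t _ _ => le_max_right _ _)
    have hBA2 : A - B ≤ Em := by
      have hd : A - B = ∑ t ∈ Finset.univ.filter (fun t => t < s), (p t - phat t) := by
        rw [Finset.sum_sub_distrib, hA, hB]
      rw [hd, hEm]
      calc ∑ t ∈ Finset.univ.filter (fun t => t < s), (p t - phat t)
          ≤ ∑ t ∈ Finset.univ.filter (fun t => t < s), max (p t - phat t) 0 :=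
            Finset.sum_le_sum fun t _ => le_max_left _ _
        _ ≤ ∑ t, max (p t - phat t) 0 :=
            Finset.sum_le_sum_of_subset_of_nonneg (Finset.filter_subset _ _)
              (fun t _ _ => le_max_right _ _)
    have tri : |distortion α phat s - distortion α p s| ≤
        |min (phat s) (max (α - B) 0) - min (p s) (max (α - B) 0)| +
        |min (p s) (max (α - B) 0) - min (p s) (max (α - A) 0)| := by
      unfold distortion
      exact abs_sub_le _ _ _
    refine tri.trans (add_le_add (lip_min _ _ _) ?_)
    rw [hg]
    exact key_ineq A B (p s) α L R (hp s) (by rw [hLdef]; linarith)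
      (by rw [hRdef]; linarith) (by rw [hLdef]; linarith) (by rw [hRdef]; linarith)
  calc ∑ s, |distortion α phat s - distortion α p s|
      ≤ ∑ s, (|phat s - p s| +
          (g ((∑ t ∈ Finset.univ.filter (fun t => t < s), p t) + p s)
            - g (∑ t ∈ Finset.univ.filter (fun t => t < s), p t))) :=
        Finset.sum_le_sum fun s _ => hpt s
    _ = (∑ s, |phat s - p s|) + (g (∑ s, p s) - g 0) := by
        rw [Finset.sum_add_distrib, tele p g Finset.univ]
    _ ≤ (∑ s, |phat s - p s|) + (R - L) := by
        have h1 : g (∑ s, p s) ≤ R := min_le_right _ _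
        have h2 : L ≤ g 0 := le_min (le_max_right _ _) hLR
        linarith
    _ = 2 * ∑ s, |phat s - p s| := by rw [hLdef, hRdef]; linarith [hEsum]
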